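/- arXiv:1005.4090 — 3 statements merged into one kernel-verified Lean document; each statement's English description precedes it below -/
import Mathlib

section
/- For every g = (z,t) ∈ V₁ × V₂: Xa(g) = 4A(g), i.e. X_v a(g) = 4⟨A(g), v⟩ for all v ∈ V₁; the symmetrized second horizontal derivative of a is a_{,uv}(g) = 4ψ(g)⟨u,v⟩ + 8(⟨z,u⟩⟨z,v⟩ + ⟨[z,u],[z,v]⟩) for all u, v ∈ V₁; and if the data is of Heisenberg type, then |Xa(g)|² = 16 ψ(g) a(g). -/
open scoped RealInnerProductSpace
open MeasureTheory

noncomputable section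

variable {V₁ V₂ : Type*} [NormedAddCommGroup V₁] [InnerProductSpace ℝ V₁]
  [NormedAddCommGroup V₂] [InnerProductSpace ℝ V₂]

/-- The horizontal derivative of `f : V₁ × V₂ → ℝ` at `g = (z,t)` in the horizontal
direction `v ∈ V₁`, namely `Df(g)(v, ½[z,v])`. -/
def Xd (b : V₁ →ₗ[ℝ] V₁ →ₗ[ℝ] V₂) (v : V₁) (f : V₁ × V₂ → ℝ) (g : V₁ × V₂) : ℝ :=
  fderiv ℝ f g (v, (2⁻¹ : ℝ) • b g.1 v)

/-- The horizontal gradient: the unique vector of `V₁` representing the linear functional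
`v ↦ X_v f (g)` via the inner product of `V₁`. -/
def Xgrad [FiniteDimensional ℝ V₁] [FiniteDimensional ℝ V₂]
    (b : V₁ →ₗ[ℝ] V₁ →ₗ[ℝ] V₂) (f : V₁ × V₂ → ℝ) (g : V₁ × V₂) : V₁ :=
  (InnerProductSpace.toDual ℝ V₁).symm
    (LinearMap.toContinuousLinearMap
      ((fderiv ℝ f g).toLinearMap.comp
        (LinearMap.prod LinearMap.id ((2⁻¹ : ℝ) • b g.1))))

/-- The symmetrized second horizontal derivative `f_{,uv} = ½(X_u X_v f + X_v X_u f)`. -/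
def X2sym (b : V₁ →ₗ[ℝ] V₁ →ₗ[ℝ] V₂) (u v : V₁) (f : V₁ × V₂ → ℝ) (g : V₁ × V₂) : ℝ :=
  (Xd b u (Xd b v f) g + Xd b v (Xd b u f) g) / 2

/-- The horizontal (sub-)Laplacian `𝓛 f = Σᵢ X_{eᵢ} X_{eᵢ} f`. -/
def hLap [FiniteDimensional ℝ V₁] (b : V₁ →ₗ[ℝ] V₁ →ₗ[ℝ] V₂) (f : V₁ × V₂ → ℝ)
    (g : V₁ × V₂) : ℝ :=
  ∑ i, Xd b (stdOrthonormalBasis ℝ V₁ i) (Xd b (stdOrthonormalBasis ℝ V₁ i) f) g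

/-- The horizontal ∞-Laplacian `𝓛_∞ f = Σ_{i,j} f_{,eᵢeⱼ} X_{eᵢ}f X_{eⱼ}f`. -/
def hInfLap [FiniteDimensional ℝ V₁] (b : V₁ →ₗ[ℝ] V₁ →ₗ[ℝ] V₂) (f : V₁ × V₂ → ℝ)
    (g : V₁ × V₂) : ℝ :=
  ∑ i, ∑ j, X2sym b (stdOrthonormalBasis ℝ V₁ i) (stdOrthonormalBasis ℝ V₁ j) f g *
    Xd b (stdOrthonormalBasis ℝ V₁ i) f g * Xd b (stdOrthonormalBasis ℝ V₁ j) f g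

/-- `ψ(z,t) = |z|²`. -/
def psiF (g : V₁ × V₂) : ℝ := ‖g.1‖ ^ 2

/-- `χ(z,t) = |t|²`. -/
def chiF (g : V₁ × V₂) : ℝ := ‖g.2‖ ^ 2

/-- `a(z,t) = ψ² + 16χ = |z|⁴ + 16|t|²`. -/
def aF (g : V₁ × V₂) : ℝ := psiF g ^ 2 + 16 * chiF g

/-- The Folland–Kaplan gauge `N = a^{1/4}`. -/
def Ng (g : V₁ × V₂) : ℝ := aF g ^ ((1 : ℝ) / 4)

/-- `A(z,t) = |z|² z + 4 J(t) z`. -/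
def Ag (J : V₂ → V₁ →ₗ[ℝ] V₁) (g : V₁ × V₂) : V₁ :=
  ‖g.1‖ ^ 2 • g.1 + (4 : ℝ) • J g.2 g.1

/-- The group law `(z,t)·(z',t') = (z+z', t+t'+½[z,z'])`. -/
def gmul (b : V₁ →ₗ[ℝ] V₁ →ₗ[ℝ] V₂) (g h : V₁ × V₂) : V₁ × V₂ :=
  (g.1 + h.1, g.2 + h.2 + (2⁻¹ : ℝ) • b g.1 h.1)

/-- The group inverse `(z,t)⁻¹ = (−z,−t)`. -/
def ginv (g : V₁ × V₂) : V₁ × V₂ := (-g.1, -g.2)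

end


section helpers

variable {V₁ V₂ : Type*} [NormedAddCommGroup V₁] [InnerProductSpace ℝ V₁]
  [NormedAddCommGroup V₂] [InnerProductSpace ℝ V₂]

private lemma aux_fderiv_aF (g p : V₁ × V₂) :
    fderiv ℝ (aF : V₁ × V₂ → ℝ) g p = 4 * ‖g.1‖ ^ 2 * ⟪g.1, p.1⟫ + 32 * ⟪g.2, p.2⟫ := by
  have h1 : HasFDerivAt (fun g : V₁ × V₂ => g.1) (ContinuousLinearMap.fst ℝ V₁ V₂) g :=
    hasFDerivAt_fst
  have h2 : HasFDerivAt (fun g : V₁ × V₂ => g.2) (ContinuousLinearMap.snd ℝ V₁ V₂) g :=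
    hasFDerivAt_snd
  have h := (h1.norm_sq.mul h1.norm_sq).add (h2.norm_sq.const_mul 16)
  have ha : (aF : V₁ × V₂ → ℝ) = fun g => ‖g.1‖ ^ 2 * ‖g.1‖ ^ 2 + 16 * ‖g.2‖ ^ 2 := by
    funext g; simp [aF, psiF, chiF]; ring
  rw [ha, HasFDerivAt.fderiv (f := fun g : V₁ × V₂ => ‖g.1‖ ^ 2 * ‖g.1‖ ^ 2 + 16 * ‖g.2‖ ^ 2) h]
  simp [real_inner_comm]
  ring

private lemma aux_Xd_aF (b : V₁ →ₗ[ℝ] V₁ →ₗ[ℝ] V₂) (v : V₁) (g : V₁ × V₂) :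
    Xd b v aF g = 4 * (‖g.1‖ ^ 2 * ⟪g.1, v⟫) + 16 * ⟪g.2, b g.1 v⟫ := by
  rw [Xd, aux_fderiv_aF]
  rw [real_inner_smul_right]
  ring

private lemma aux_fderiv2 [FiniteDimensional ℝ V₁] (b : V₁ →ₗ[ℝ] V₁ →ₗ[ℝ] V₂) (v : V₁)
    (g p : V₁ × V₂) :
    fderiv ℝ (fun g : V₁ × V₂ => 4 * (‖g.1‖ ^ 2 * ⟪g.1, v⟫) + 16 * ⟪g.2, b g.1 v⟫) g p
      = 4 * ‖g.1‖ ^ 2 * ⟪p.1, v⟫ + 8 * ⟪g.1, p.1⟫ * ⟪g.1, v⟫ + 16 * ⟪g.2, b p.1 v⟫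
        + 16 * ⟪p.2, b g.1 v⟫ := by
  have h1 : HasFDerivAt (fun g : V₁ × V₂ => g.1) (ContinuousLinearMap.fst ℝ V₁ V₂) g :=
    hasFDerivAt_fst
  have h2 : HasFDerivAt (fun g : V₁ × V₂ => g.2) (ContinuousLinearMap.snd ℝ V₁ V₂) g :=
    hasFDerivAt_snd
  set L : V₁ →L[ℝ] V₂ := LinearMap.toContinuousLinearMap (b.flip v) with hLdef
  have hL : HasFDerivAt (fun g : V₁ × V₂ => b g.1 v)
      (L.comp (ContinuousLinearMap.fst ℝ V₁ V₂)) g :=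
    (L.comp (ContinuousLinearMap.fst ℝ V₁ V₂)).hasFDerivAt
  have hA : HasFDerivAt (fun g : V₁ × V₂ => ⟪g.1, v⟫) _ g := h1.inner ℝ (hasFDerivAt_const v g)
  have h := ((h1.norm_sq.mul hA).const_mul 4).add ((h2.inner ℝ hL).const_mul 16)
  rw [HasFDerivAt.fderiv (f := fun g : V₁ × V₂ => 4 * (‖g.1‖ ^ 2 * ⟪g.1, v⟫) + 16 * ⟪g.2, b g.1 v⟫) h]
  simp [fderivInnerCLM_apply, real_inner_comm, hLdef]
  ring

private lemma aux_XdXd [FiniteDimensional ℝ V₁] (b : V₁ →ₗ[ℝ] V₁ →ₗ[ℝ] V₂) (u v : V₁)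
    (g : V₁ × V₂) :
    Xd b u (Xd b v aF) g = 4 * ‖g.1‖ ^ 2 * ⟪u, v⟫ + 8 * ⟪g.1, u⟫ * ⟪g.1, v⟫
      + 16 * ⟪g.2, b u v⟫ + 8 * ⟪b g.1 u, b g.1 v⟫ := by
  have hfun : Xd b v aF = fun g : V₁ × V₂ => 4 * (‖g.1‖ ^ 2 * ⟪g.1, v⟫) + 16 * ⟪g.2, b g.1 v⟫ :=
    funext fun g => aux_Xd_aF b v g
  rw [Xd, hfun, aux_fderiv2]
  simp only [real_inner_smul_left]
  ring

end helpers

theorem riesz_htype_deriv_a {V₁ V₂ : Type*} [NormedAddCommGroup V₁] [InnerProductSpace ℝ V₁]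
    [FiniteDimensional ℝ V₁] [NormedAddCommGroup V₂] [InnerProductSpace ℝ V₂]
    [FiniteDimensional ℝ V₂] (m k : ℕ) (hm : 1 ≤ m) (hk : 1 ≤ k)
    (hdV₁ : Module.finrank ℝ V₁ = m) (hdV₂ : Module.finrank ℝ V₂ = k)
    (b : V₁ →ₗ[ℝ] V₁ →ₗ[ℝ] V₂) (hskew : ∀ z z' : V₁, b z z' = - b z' z)
    (J : V₂ → V₁ →ₗ[ℝ] V₁) (hJ : ∀ (t : V₂) (z z' : V₁), ⟪J t z, z'⟫ = ⟪b z z', t⟫) :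
    (∀ (g : V₁ × V₂) (v : V₁), Xd b v aF g = 4 * ⟪Ag J g, v⟫) ∧
    (∀ g : V₁ × V₂, Xgrad b aF g = (4 : ℝ) • Ag J g) ∧
    (∀ (g : V₁ × V₂) (u v : V₁),
      X2sym b u v aF g =
        4 * psiF g * ⟪u, v⟫ + 8 * (⟪g.1, u⟫ * ⟪g.1, v⟫ + ⟪b g.1 u, b g.1 v⟫)) ∧
    ((∀ (t : V₂) (z : V₁), ‖J t z‖ = ‖t‖ * ‖z‖) →
      ∀ g : V₁ × V₂, ‖Xgrad b aF g‖ ^ 2 = 16 * psiF g * aF g) := by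
  have hbzz : ∀ z : V₁, b z z = 0 := by
    intro z
    have h := hskew z z
    have h2 : (2 : ℝ) • b z z = 0 := by
      rw [two_smul]
      nth_rewrite 1 [h]
      abel
    exact (smul_eq_zero.mp h2).resolve_left (by norm_num)
  have key : ∀ (g : V₁ × V₂) (v : V₁), Xd b v aF g = 4 * ⟪Ag J g, v⟫ := by
    intro g v
    rw [aux_Xd_aF]
    have hAg : ⟪Ag J g, v⟫ = ‖g.1‖ ^ 2 * ⟪g.1, v⟫ + 4 * ⟪b g.1 v, g.2⟫ := by
      simp [Ag, inner_add_left, real_inner_smul_left, hJ]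
    rw [hAg, real_inner_comm g.2]
    ring
  have hg2 : ∀ g : V₁ × V₂, Xgrad b aF g = (4 : ℝ) • Ag J g := by
    intro g
    have hdual : (LinearMap.toContinuousLinearMap
        ((fderiv ℝ aF g).toLinearMap.comp
          (LinearMap.prod LinearMap.id ((2⁻¹ : ℝ) • b g.1))))
        = InnerProductSpace.toDual ℝ V₁ ((4 : ℝ) • Ag J g) := by
      ext v
      have h1 : (LinearMap.toContinuousLinearMap
          ((fderiv ℝ aF g).toLinearMap.comp
            (LinearMap.prod LinearMap.id ((2⁻¹ : ℝ) • b g.1)))) v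
          = Xd b v aF g := rfl
      rw [h1, key g v, InnerProductSpace.toDual_apply_apply, real_inner_smul_left]
    rw [Xgrad, hdual, LinearIsometryEquiv.symm_apply_apply]
  refine ⟨key, hg2, ?_, ?_⟩
  · intro g u v
    rw [X2sym, aux_XdXd, aux_XdXd]
    rw [hskew v u]
    simp only [inner_neg_right, psiF]
    rw [show (⟪b g.1 v, b g.1 u⟫ : ℝ) = ⟪b g.1 u, b g.1 v⟫ from real_inner_comm _ _,
      show (⟪v, u⟫ : ℝ) = ⟪u, v⟫ from real_inner_comm _ _]
    ring
  · intro hH g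
    rw [hg2, norm_smul]
    have horth : ⟪(‖g.1‖ ^ 2 : ℝ) • g.1, (4 : ℝ) • J g.2 g.1⟫ = 0 := by
      rw [real_inner_smul_left, real_inner_smul_right, real_inner_comm, hJ, hbzz]
      simp
    have hnormA : ‖Ag J g‖ ^ 2 = ‖(‖g.1‖ ^ 2 : ℝ) • g.1‖ ^ 2 + ‖(4 : ℝ) • J g.2 g.1‖ ^ 2 := by
      rw [Ag, norm_add_sq_real, horth]
      ring
    have e1 : ‖(‖g.1‖ ^ 2 : ℝ) • g.1‖ ^ 2 = ‖g.1‖ ^ 6 := by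
      rw [norm_smul, Real.norm_eq_abs, abs_of_nonneg (by positivity)]
      ring
    have e2 : ‖(4 : ℝ) • J g.2 g.1‖ ^ 2 = 16 * (‖g.2‖ ^ 2 * ‖g.1‖ ^ 2) := by
      rw [norm_smul, hH]
      simp [Real.norm_eq_abs]
      ring
    rw [mul_pow, hnormA, e1, e2]
    simp only [psiF, aF, chiF, Real.norm_eq_abs]
    rw [abs_of_nonneg (by norm_num : (0:ℝ) ≤ 4)]
    ring
end

section
/- For every g = (z,t) ∈ V₁ × V₂ with g ≠ (0,0): XN(g) = N(g)⁻³ A(g). If moreover the data is of Heisenberg type, then |XN(g)|² = ψ(g) N(g)⁻². -/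
open scoped RealInnerProductSpace
open MeasureTheory

lemma aF_pos' {V₁ V₂ : Type*} [NormedAddCommGroup V₁] [InnerProductSpace ℝ V₁]
    [NormedAddCommGroup V₂] [InnerProductSpace ℝ V₂] (g : V₁ × V₂) (hg : g ≠ (0, 0)) :
    0 < aF g := by
  have h : g.1 ≠ 0 ∨ g.2 ≠ 0 := by
    by_contra h; push_neg at h; exact hg (Prod.ext h.1 h.2)
  have h1 : (0:ℝ) ≤ psiF g ^ 2 := sq_nonneg _
  have h2 : (0:ℝ) ≤ chiF g := sq_nonneg _
  rcases h with h | h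
  · have hz : 0 < ‖g.1‖ := norm_pos_iff.mpr h
    have : 0 < psiF g ^ 2 := by
      have : 0 < psiF g := by simpa [psiF] using pow_pos hz 2
      positivity
    unfold aF; linarith
  · have hz : 0 < ‖g.2‖ := norm_pos_iff.mpr h
    have : 0 < chiF g := by simpa [chiF] using pow_pos hz 2
    unfold aF; linarith

theorem riesz_htype_grad_N {V₁ V₂ : Type*} [NormedAddCommGroup V₁] [InnerProductSpace ℝ V₁]
    [FiniteDimensional ℝ V₁] [NormedAddCommGroup V₂] [InnerProductSpace ℝ V₂]
    [FiniteDimensional ℝ V₂] (m k : ℕ) (hm : 1 ≤ m) (hk : 1 ≤ k)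
    (hdV₁ : Module.finrank ℝ V₁ = m) (hdV₂ : Module.finrank ℝ V₂ = k)
    (b : V₁ →ₗ[ℝ] V₁ →ₗ[ℝ] V₂) (hskew : ∀ z z' : V₁, b z z' = - b z' z)
    (J : V₂ → V₁ →ₗ[ℝ] V₁) (hJ : ∀ (t : V₂) (z z' : V₁), ⟪J t z, z'⟫ = ⟪b z z', t⟫) :
    (∀ g : V₁ × V₂, g ≠ (0, 0) → Xgrad b Ng g = ((Ng g) ^ 3)⁻¹ • Ag J g) ∧
    ((∀ (t : V₂) (z : V₁), ‖J t z‖ = ‖t‖ * ‖z‖) →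
      ∀ g : V₁ × V₂, g ≠ (0, 0) → ‖Xgrad b Ng g‖ ^ 2 = psiF g * ((Ng g) ^ 2)⁻¹) := by
  have key : ∀ g : V₁ × V₂, g ≠ (0, 0) → Xgrad b Ng g = ((Ng g) ^ 3)⁻¹ • Ag J g := by
    intro g hg
    set z := g.1
    set t := g.2
    -- positivity of aF g
    have ha0 : 0 < aF g := aF_pos' g hg
    have hN0 : 0 < Ng g := Real.rpow_pos_of_pos ha0 _
    -- derivative of aF
    have h1 : HasFDerivAt (fun p : V₁ × V₂ => ‖p.1‖ ^ 2)
        (2 • (innerSL ℝ z).comp (ContinuousLinearMap.fst ℝ V₁ V₂)) g :=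
      (hasFDerivAt_fst (𝕜 := ℝ) (p := g)).norm_sq
    have h2 : HasFDerivAt (fun p : V₁ × V₂ => ‖p.2‖ ^ 2)
        (2 • (innerSL ℝ t).comp (ContinuousLinearMap.snd ℝ V₁ V₂)) g :=
      (hasFDerivAt_snd (𝕜 := ℝ) (p := g)).norm_sq
    have ha : HasFDerivAt aF
        (‖g.1‖ ^ 2 • 2 • (innerSL ℝ z).comp (ContinuousLinearMap.fst ℝ V₁ V₂) +
            ‖g.1‖ ^ 2 • 2 • (innerSL ℝ z).comp (ContinuousLinearMap.fst ℝ V₁ V₂) +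
          (16:ℝ) • 2 • (innerSL ℝ t).comp (ContinuousLinearMap.snd ℝ V₁ V₂)) g := by
      have h := ((h1.mul h1).add (h2.const_mul (16:ℝ)))
      have hfun : (fun p : V₁ × V₂ => ‖p.1‖ ^ 2 * ‖p.1‖ ^ 2 + 16 * ‖p.2‖ ^ 2) = aF := by
        funext p; simp only [aF, psiF, chiF]; ring
      rw [← hfun]
      exact h
    -- derivative of Ng
    have hrpow : HasDerivAt (fun y : ℝ => y ^ ((1:ℝ)/4))
        ((1/4 : ℝ) * aF g ^ ((1:ℝ)/4 - 1)) (aF g) :=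
      Real.hasDerivAt_rpow_const (Or.inl ha0.ne')
    have hNder : HasFDerivAt Ng
        (((1/4 : ℝ) * aF g ^ ((1:ℝ)/4 - 1)) •
          (‖g.1‖ ^ 2 • 2 • (innerSL ℝ z).comp (ContinuousLinearMap.fst ℝ V₁ V₂) +
              ‖g.1‖ ^ 2 • 2 • (innerSL ℝ z).comp (ContinuousLinearMap.fst ℝ V₁ V₂) +
            (16:ℝ) • 2 • (innerSL ℝ t).comp (ContinuousLinearMap.snd ℝ V₁ V₂))) g :=
      hrpow.comp_hasFDerivAt g ha
    have hfd := hNder.fderiv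
    -- Now compute Xgrad
    unfold Xgrad
    refine ext_inner_right ℝ fun v => ?_
    rw [InnerProductSpace.toDual_symm_apply]
    have hNcube : ((Ng g) ^ 3)⁻¹ = aF g ^ (-(3:ℝ)/4) := by
      rw [Ng, ← Real.rpow_natCast (aF g ^ ((1:ℝ)/4)) 3, ← Real.rpow_mul ha0.le,
        ← Real.rpow_neg ha0.le]
      norm_num
    have hexp : aF g ^ ((1:ℝ)/4 - 1) = aF g ^ (-(3:ℝ)/4) := by norm_num
    simp only [InnerProductSpace.toDual_apply_apply, LinearMap.coe_comp,
      ContinuousLinearMap.coe_coe, Function.comp_apply, LinearMap.coe_toContinuousLinearMap',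
      LinearMap.prod_apply, LinearMap.id_coe, id_eq, Function.prod, LinearMap.smul_apply, hfd,
      ContinuousLinearMap.smul_apply, ContinuousLinearMap.add_apply,
      ContinuousLinearMap.coe_smul', Pi.smul_apply, ContinuousLinearMap.coe_comp',
      ContinuousLinearMap.coe_fst', ContinuousLinearMap.coe_snd', innerSL_apply_apply,
      smul_eq_mul]
    rw [hNcube, hexp, Ag]
    have hJv : ⟪J t z, v⟫ = ⟪t, b z v⟫ := by rw [hJ]; exact real_inner_comm _ _
    rw [inner_smul_left, inner_add_left, inner_smul_left, inner_smul_left, hJv]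
    rw [real_inner_smul_right]
    push_cast
    simp only [starRingEnd_apply, star_trivial]
    ring
  refine ⟨key, fun hH g hg => ?_⟩
  rw [key g hg]
  set z := g.1
  set t := g.2
  have hbzz : b z z = 0 := by
    have h := hskew z z
    have h2 : (2:ℝ) • b z z = 0 := by
      rw [two_smul]; nth_rewrite 2 [h]; simp
    exact (smul_eq_zero.mp h2).resolve_left (by norm_num)
  have ha0 : 0 < aF g := aF_pos' g hg
  have hN0 : 0 < Ng g := Real.rpow_pos_of_pos ha0 _
  have hN4 : Ng g ^ 4 = aF g := by
    rw [Ng, ← Real.rpow_natCast (aF g ^ ((1:ℝ)/4)) 4, ← Real.rpow_mul ha0.le]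
    norm_num
  -- inner product of J t z with z is zero
  have hperp : ⟪J t z, z⟫ = 0 := by rw [hJ, hbzz]; simp
  have hAnorm : ‖Ag J g‖ ^ 2 = psiF g * aF g := by
    rw [Ag]
    have expand : ‖(‖z‖:ℝ) ^ 2 • z + (4:ℝ) • J t z‖ ^ 2
        = (‖z‖^2)^2 * ‖z‖^2 + 2 * (‖z‖^2 * 4) * ⟪z, J t z⟫ + 16 * ‖J t z‖^2 := by
      rw [← real_inner_self_eq_norm_sq]
      rw [inner_add_add_self]
      rw [real_inner_smul_left, real_inner_smul_left, real_inner_smul_left,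
        real_inner_smul_right, real_inner_smul_right, real_inner_smul_right]
      rw [real_inner_self_eq_norm_sq, real_inner_self_eq_norm_sq,
        real_inner_comm z ((J t) z), norm_smul]
      simp only [Real.norm_ofNat]
      ring
    rw [expand, real_inner_comm, hperp, hH t z]
    simp only [psiF, aF, chiF]
    ring
  rw [norm_smul, mul_pow, hAnorm]
  have h3 : ((Ng g ^ 3)⁻¹ : ℝ) ≠ 0 := by positivity
  rw [norm_inv, Real.norm_eq_abs, abs_of_pos (by positivity : (0:ℝ) < Ng g ^ 3)]
  rw [← hN4]
  field_simp
end

section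
/- For every twice continuously differentiable function f : V₁ × V₂ → ℝ, every g = (z,t) ∈ V₁ × V₂, and all u, v ∈ V₁, the horizontal derivatives satisfy the commutator formula X_u(X_v f)(g) − X_v(X_u f)(g) = Df(g)(0, [u,v]). -/
open scoped RealInnerProductSpace
open MeasureTheory

lemma key_Xd_second {V₁ V₂ : Type*} [NormedAddCommGroup V₁] [InnerProductSpace ℝ V₁]
    [FiniteDimensional ℝ V₁] [NormedAddCommGroup V₂] [InnerProductSpace ℝ V₂]
    [FiniteDimensional ℝ V₂]
    (b : V₁ →ₗ[ℝ] V₁ →ₗ[ℝ] V₂) (f : V₁ × V₂ → ℝ) (hf : ContDiff ℝ 2 f)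
    (g : V₁ × V₂) (u v : V₁) :
    Xd b u (Xd b v f) g =
      fderiv ℝ (fderiv ℝ f) g (u, (2⁻¹ : ℝ) • b g.1 u) (v, (2⁻¹ : ℝ) • b g.1 v)
        + fderiv ℝ f g (0, (2⁻¹ : ℝ) • b u v) := by
  have hF : ContDiff ℝ 1 (fderiv ℝ f) := hf.fderiv_right (by norm_num)
  set S : (V₁ × V₂) →L[ℝ] V₂ :=
    LinearMap.toContinuousLinearMap
      (((2⁻¹ : ℝ) • b.flip v).comp (LinearMap.fst ℝ V₁ V₂)) with hS
  have hSapp : ∀ w : V₁ × V₂, S w = (2⁻¹ : ℝ) • b w.1 v := fun w => rfl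
  have hℓ : HasFDerivAt (fun g : V₁ × V₂ => ((v : V₁), (2⁻¹ : ℝ) • b g.1 v))
      ((0 : (V₁ × V₂) →L[ℝ] V₁).prod S) g :=
    HasFDerivAt.prodMk (hasFDerivAt_const v g) (S.hasFDerivAt)
  have hFd : HasFDerivAt (fderiv ℝ f) (fderiv ℝ (fderiv ℝ f) g) g :=
    ((hF.differentiable one_ne_zero) g).hasFDerivAt
  have hmain : HasFDerivAt (Xd b v f)
      ((fderiv ℝ f g).comp ((0 : (V₁ × V₂) →L[ℝ] V₁).prod S)
        + (fderiv ℝ (fderiv ℝ f) g).flip (v, (2⁻¹ : ℝ) • b g.1 v)) g :=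
    hFd.clm_apply hℓ
  have : Xd b u (Xd b v f) g =
      ((fderiv ℝ f g).comp ((0 : (V₁ × V₂) →L[ℝ] V₁).prod S)
        + (fderiv ℝ (fderiv ℝ f) g).flip (v, (2⁻¹ : ℝ) • b g.1 v))
        (u, (2⁻¹ : ℝ) • b g.1 u) := by
    rw [Xd, hmain.fderiv]
  rw [this]
  simp only [ContinuousLinearMap.add_apply, ContinuousLinearMap.coe_comp',
    Function.comp_apply, ContinuousLinearMap.prod_apply, ContinuousLinearMap.zero_apply,
    ContinuousLinearMap.flip_apply]
  rw [hSapp]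
  ring

theorem riesz_htype_horizontal_commutator {V₁ V₂ : Type*} [NormedAddCommGroup V₁] [InnerProductSpace ℝ V₁]
    [FiniteDimensional ℝ V₁] [NormedAddCommGroup V₂] [InnerProductSpace ℝ V₂]
    [FiniteDimensional ℝ V₂] (m k : ℕ) (hm : 1 ≤ m) (hk : 1 ≤ k)
    (hdV₁ : Module.finrank ℝ V₁ = m) (hdV₂ : Module.finrank ℝ V₂ = k)
    (b : V₁ →ₗ[ℝ] V₁ →ₗ[ℝ] V₂) (hskew : ∀ z z' : V₁, b z z' = - b z' z) :
    ∀ f : V₁ × V₂ → ℝ, ContDiff ℝ 2 f → ∀ (g : V₁ × V₂) (u v : V₁),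
      Xd b u (Xd b v f) g - Xd b v (Xd b u f) g = fderiv ℝ f g (0, b u v) := by
  intro f hf g u v
  have hsymm : IsSymmSndFDerivAt ℝ f g :=
    hf.contDiffAt.isSymmSndFDerivAt (by norm_num)
  have h2 : fderiv ℝ f g (0, (2⁻¹ : ℝ) • b u v)
      - fderiv ℝ f g (0, (2⁻¹ : ℝ) • b v u) = fderiv ℝ f g (0, b u v) := by
    rw [← map_sub]
    congr 1
    have hb : (2⁻¹ : ℝ) • b u v - (2⁻¹ : ℝ) • b v u = b u v := by
      rw [hskew v u]; module
    simp [Prod.mk_sub_mk, hb]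
  rw [key_Xd_second b f hf g u v, key_Xd_second b f hf g v u,
    hsymm (v, (2⁻¹ : ℝ) • b g.1 v) (u, (2⁻¹ : ℝ) • b g.1 u)]
  linarith [h2]
end
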